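/- Let C be the octonion algebra over an algebraically closed field with char ≠ 2, with the Z₂³-grading Γ₀ induced by the Cayley–Dickson doubling process. Then the stabilizer Stab(Γ₀) (automorphisms of C fixing each homogeneous component as a subspace) is isomorphic to Z₂³: each such automorphism multiplies each w_i by ±1, and any choice of signs occurs. -/

import Mathlib

/-- The stabilizer of the `ℤ₂³`-grading on the octonion algebra induced by the
Cayley–Dickson doubling process is isomorphic to `ℤ₂³`: every automorphism fixing all
homogeneous components multiplies each `wᵢ` by `±1`, and every choice of signs occurs. -/
theorem stabilizer_of_CD_grading_on_octonions
    {F : Type*} [Field F] [IsAlgClosed F] (h2 : (2 : F) ≠ 0)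
    {C : Type*} [NonAssocRing C] [Module F C] [SMulCommClass F C C] [IsScalarTower F C C]
    (n : QuadraticForm F C)
    (hdim : Module.finrank F C = 8)
    (hcomp : ∀ x y : C, n (x * y) = n x * n y)
    (hnondeg : ∀ x : C, (∀ y : C, QuadraticMap.polar ⇑n x y = 0) → x = 0)
    (ℬ : (Fin 3 → ZMod 2) → Submodule F C)
    (hinternal : DirectSum.IsInternal ℬ)
    (hmul : ∀ (g h : Fin 3 → ZMod 2) (x y : C), x ∈ ℬ g → y ∈ ℬ h → x * y ∈ ℬ (g + h))
    (hone : (1 : C) ∈ ℬ 0)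
    (w : Fin 3 → C)
    (hw : ∀ i, w i ∈ ℬ (Pi.single i 1))
    (hwsq : ∀ i, w i * w i = 1)
    (hdim1 : ∀ g, Module.finrank F ↥(ℬ g) = 1) :
    ∃ S : Subgroup (C ≃ₗ[F] C),
      (∀ ψ : C ≃ₗ[F] C, ψ ∈ S ↔
        ((∀ x y : C, ψ (x * y) = ψ x * ψ y) ∧
          ∀ g, Submodule.map (ψ : C →ₗ[F] C) (ℬ g) = ℬ g)) ∧
      (∀ ψ ∈ S, ∀ i, ψ (w i) = w i ∨ ψ (w i) = -(w i)) ∧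
      (∀ s : Fin 3 → Bool, ∃ ψ ∈ S, ∀ i, ψ (w i) = if s i then -(w i) else w i) ∧
      Nonempty (↥S ≃* Multiplicative (Fin 3 → ZMod 2)) := by
  classical
  have hfd : FiniteDimensional F C := FiniteDimensional.of_finrank_pos (by rw [hdim]; norm_num)
  have hC : Nontrivial C := by
    by_contra h
    rw [not_nontrivial_iff_subsingleton] at h
    rw [Module.finrank_zero_of_subsingleton] at hdim
    exact absurd hdim (by norm_num)
  have h10 : (1 : C) ≠ 0 := one_ne_zero
  have z2 : ∀ a : ZMod 2, a = 0 ∨ a = 1 := by decide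
  -- norm facts
  have hn1 : n 1 = 1 := by
    have h11 := hcomp 1 1
    rw [one_mul] at h11
    have h0 : n 1 * (n 1 - 1) = 0 := by linear_combination -h11
    rcases mul_eq_zero.mp h0 with h | h
    · exfalso
      have hz : ∀ x : C, n x = 0 := fun x => by
        have := hcomp x 1; rw [mul_one, h, mul_zero] at this; exact this
      exact h10 (hnondeg 1 fun y => by simp [QuadraticMap.polar, hz])
    · exact sub_eq_zero.mp h
  have hnw : ∀ i, n (w i) ≠ 0 := by
    intro i hni
    have := hcomp (w i) (w i)
    rw [hwsq i, hn1, hni, mul_zero] at this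
    exact one_ne_zero this
  -- the distinguished spanning vectors
  set u : (Fin 3 → ZMod 2) → C := fun g =>
    ((if g 0 = 1 then w 0 else 1) * (if g 1 = 1 then w 1 else 1)) *
      (if g 2 = 1 then w 2 else 1) with hu_def
  have hu_mem : ∀ g, u g ∈ ℬ g := by
    intro g
    have h0 : (if g 0 = 1 then w 0 else 1) ∈ ℬ (Pi.single 0 (g 0)) := by
      rcases z2 (g 0) with h | h
      · rw [h, if_neg (by decide)]; simpa using hone
      · rw [h, if_pos rfl]; exact hw 0
    have h1 : (if g 1 = 1 then w 1 else 1) ∈ ℬ (Pi.single 1 (g 1)) := by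
      rcases z2 (g 1) with h | h
      · rw [h, if_neg (by decide)]; simpa using hone
      · rw [h, if_pos rfl]; exact hw 1
    have h2' : (if g 2 = 1 then w 2 else 1) ∈ ℬ (Pi.single 2 (g 2)) := by
      rcases z2 (g 2) with h | h
      · rw [h, if_neg (by decide)]; simpa using hone
      · rw [h, if_pos rfl]; exact hw 2
    have hmem := hmul _ _ _ _ (hmul _ _ _ _ h0 h1) h2'
    have hg : ((Pi.single 0 (g 0) : Fin 3 → ZMod 2) + (Pi.single 1 (g 1) : Fin 3 → ZMod 2)) + (Pi.single 2 (g 2) : Fin 3 → ZMod 2) = g := by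
      funext j; fin_cases j <;> simp [Pi.single_apply]
    rw [hg] at hmem
    exact hmem
  have hu_ne : ∀ g, u g ≠ 0 := by
    intro g hzero
    have hnz : n (u g) = 0 := by rw [hzero]; exact QuadraticMap.map_zero n
    have hfac : ∀ i, n (if g i = 1 then w i else 1) ≠ 0 := by
      intro i; split_ifs
      · exact hnw i
      · rw [hn1]; exact one_ne_zero
    have : n (u g) ≠ 0 := by
      rw [hu_def]
      simp only
      rw [hcomp, hcomp]
      exact mul_ne_zero (mul_ne_zero (hfac 0) (hfac 1)) (hfac 2)
    exact this hnz
  -- one-dimensional components are spanned by any nonzero member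
  have hspan' : ∀ (g) (x : C), x ∈ ℬ g → x ≠ 0 → ℬ g = Submodule.span F {x} := by
    intro g x hx hxne
    haveI : FiniteDimensional F (ℬ g) :=
      FiniteDimensional.of_finrank_pos (by rw [hdim1 g]; norm_num)
    refine (Submodule.eq_of_le_of_finrank_eq ?_ ?_).symm
    · rw [Submodule.span_le, Set.singleton_subset_iff]; exact hx
    · rw [finrank_span_singleton hxne, hdim1 g]
  have hspan : ∀ g, ℬ g = Submodule.span F {u g} := fun g =>
    hspan' g (u g) (hu_mem g) (hu_ne g)
  have hwne : ∀ i, w i ≠ 0 := by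
    intro i h
    rw [← hwsq i, h, zero_mul] at h10
    exact h10 rfl
  have hwneg : ∀ i, -(w i) ≠ w i := by
    intro i h
    have h2' : (2 : F) • w i = 0 := by
      rw [two_smul]
      nth_rewrite 1 [← h]
      exact neg_add_cancel _
    rcases smul_eq_zero.mp h2' with h' | h'
    · exact h2 h'
    · exact hwne i h'
  have htop : Submodule.span F (Set.range u) = ⊤ := by
    rw [eq_top_iff, ← hinternal.submodule_iSup_eq_top]
    exact iSup_le fun g => by
      rw [hspan g]
      exact Submodule.span_mono (Set.singleton_subset_iff.mpr ⟨g, rfl⟩)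
  -- the key scalar lemma
  have hkey : ∀ ψ : C ≃ₗ[F] C, (∀ x y : C, ψ (x * y) = ψ x * ψ y) →
      (∀ g, Submodule.map (ψ : C →ₗ[F] C) (ℬ g) = ℬ g) →
      ψ 1 = 1 ∧ ∀ i, ∃ d : F, (d = 1 ∨ d = -1) ∧ ψ (w i) = d • w i := by
    intro ψ hm hp
    have hsp0 : ℬ 0 = Submodule.span F {(1 : C)} := hspan' 0 1 hone h10
    have h1 : ψ 1 = 1 := by
      have hmem : ψ 1 ∈ ℬ 0 := by
        rw [← hp 0]; exact ⟨1, hone, rfl⟩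
      obtain ⟨t, ht⟩ := Submodule.mem_span_singleton.mp (hsp0 ▸ hmem)
      -- ht : t • 1 = ψ 1
      have hsq : (t * t) • (1 : C) = t • (1 : C) := by
        have h11 := hm 1 1
        rw [one_mul, ← ht] at h11
        rw [smul_mul_smul_comm, one_mul] at h11
        exact h11.symm
      have htne : t ≠ 0 := by
        intro h0
        rw [h0, zero_smul] at ht
        exact h10 (ψ.injective (by rw [← ht, map_zero]))
      have ht1 : t = 1 := by
        have : (t * t - t) • (1 : C) = 0 := by rw [sub_smul, hsq, sub_self]
        rcases smul_eq_zero.mp this with h' | h'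
        · rcases mul_eq_zero.mp (show t * (t - 1) = 0 by linear_combination h') with h'' | h''
          · exact absurd h'' htne
          · exact sub_eq_zero.mp h''
        · exact absurd h' h10
      rw [← ht, ht1, one_smul]
    refine ⟨h1, fun i => ?_⟩
    have hspi : ℬ (Pi.single i 1) = Submodule.span F {w i} := hspan' _ _ (hw i) (hwne i)
    have hmem : ψ (w i) ∈ ℬ (Pi.single i 1) := by
      rw [← hp (Pi.single i 1)]; exact ⟨w i, hw i, rfl⟩
    obtain ⟨d, hd⟩ := Submodule.mem_span_singleton.mp (hspi ▸ hmem)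
    -- hd : d • w i = ψ (w i)
    have hd2 : (d * d) • (1 : C) = 1 := by
      have := hm (w i) (w i)
      rw [hwsq i, h1, ← hd, smul_mul_smul_comm, hwsq i] at this
      exact this.symm
    have hdd : d * d = 1 := by
      have : (d * d - 1) • (1 : C) = 0 := by rw [sub_smul, hd2, one_smul, sub_self]
      rcases smul_eq_zero.mp this with h' | h'
      · linear_combination h'
      · exact absurd h' h10
    rcases mul_self_eq_one_iff.mp hdd with h' | h'
    · exact ⟨d, Or.inl h', hd.symm⟩
    · exact ⟨d, Or.inr h', hd.symm⟩
  -- the subgroup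
  let S : Subgroup (C ≃ₗ[F] C) :=
    { carrier := {ψ | (∀ x y : C, ψ (x * y) = ψ x * ψ y) ∧
        ∀ g, Submodule.map (ψ : C →ₗ[F] C) (ℬ g) = ℬ g}
      one_mem' := ⟨fun _ _ => rfl, fun g => by
        rw [show ((1 : C ≃ₗ[F] C) : C →ₗ[F] C) = LinearMap.id from rfl, Submodule.map_id]⟩
      mul_mem' := by
        rintro a b ⟨ham, hap⟩ ⟨hbm, hbp⟩
        refine ⟨fun x y => ?_, fun g => ?_⟩
        · show a (b (x * y)) = a (b x) * a (b y)
          rw [hbm, ham]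
        · rw [show ((a * b : C ≃ₗ[F] C) : C →ₗ[F] C) =
            (a : C →ₗ[F] C) ∘ₗ (b : C →ₗ[F] C) from rfl, Submodule.map_comp, hbp, hap]
      inv_mem' := by
        rintro a ⟨ham, hap⟩
        refine ⟨fun x y => ?_, fun g => ?_⟩
        · obtain ⟨x', rfl⟩ := a.surjective x
          obtain ⟨y', rfl⟩ := a.surjective y
          show a.symm (a x' * a y') = a.symm (a x') * a.symm (a y')
          rw [← ham, a.symm_apply_apply, a.symm_apply_apply, a.symm_apply_apply]
        · conv_lhs => rw [← hap g]
          rw [← Submodule.map_comp]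
          have hid : ((a⁻¹ : C ≃ₗ[F] C) : C →ₗ[F] C) ∘ₗ (a : C →ₗ[F] C) = LinearMap.id := by
            ext x; exact a.symm_apply_apply x
          rw [hid, Submodule.map_id] }
  have hSmem : ∀ ψ : C ≃ₗ[F] C, ψ ∈ S ↔
      ((∀ x y : C, ψ (x * y) = ψ x * ψ y) ∧
        ∀ g, Submodule.map (ψ : C →ₗ[F] C) (ℬ g) = ℬ g) := fun ψ => Iff.rfl
  -- construction of sign automorphisms
  have hconstr : ∀ s : Fin 3 → Bool, ∃ ψ : C ≃ₗ[F] C, ψ ∈ S ∧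
      ∀ i, ψ (w i) = if s i then -(w i) else w i := by
    intro s
    set εu : (Fin 3 → ZMod 2) → Fˣ :=
      fun g => ∏ i : Fin 3, if s i then (-1 : Fˣ) ^ ((g i).val) else 1 with hεu_def
    have hfac : ∀ (b : Bool) (a c : ZMod 2),
        (if b then (-1 : Fˣ) ^ ((a + c).val) else 1) =
          (if b then (-1 : Fˣ) ^ (a.val) else 1) * (if b then (-1 : Fˣ) ^ (c.val) else 1) := by
      intro b a c
      cases b
      · simp
      · simp only [if_pos]
        rcases z2 a with rfl | rfl <;> rcases z2 c with rfl | rfl <;>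
          norm_num [show ((0 : ZMod 2) + 0).val = 0 from rfl,
            show ((0 : ZMod 2) + 1).val = 1 from rfl,
            show ((1 : ZMod 2) + 0).val = 1 from rfl,
            show ((1 : ZMod 2) + 1).val = 0 from rfl,
            show ((0 : ZMod 2)).val = 0 from rfl, show ((1 : ZMod 2)).val = 1 from rfl,
            show ZMod.val (2 : ZMod 2) = 0 from rfl]
    have hεmul : ∀ g h, εu (g + h) = εu g * εu h := by
      intro g h
      rw [hεu_def]
      simp only
      rw [← Finset.prod_mul_distrib]
      exact Finset.prod_congr rfl fun i _ => by
        simpa using hfac (s i) (g i) (h i)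
    let bas : ∀ g, Module.Basis Unit F (ℬ g) := fun g =>
      FiniteDimensional.basisSingleton Unit (hdim1 g) ⟨u g, hu_mem g⟩
        (by simpa [Submodule.mk_eq_zero] using hu_ne g)
    let B : Module.Basis (Fin 3 → ZMod 2) F C :=
      (hinternal.collectedBasis bas).reindex (Equiv.sigmaUnique _ _)
    have hB : ∀ g, B g = u g := by
      intro g
      show ((hinternal.collectedBasis bas).reindex (Equiv.sigmaUnique _ _)) g = u g
      rw [Module.Basis.reindex_apply, hinternal.collectedBasis_coe]
      show ((bas g default : ℬ g) : C) = u g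
      rw [show bas g default = ⟨u g, hu_mem g⟩ from
        FiniteDimensional.basisSingleton_apply _ _ _ _ _]
    let ψs : C ≃ₗ[F] C := B.equiv (B.unitsSMul εu) (Equiv.refl _)
    have hψsB : ∀ g, ψs (u g) = (εu g : F) • u g := by
      intro g
      rw [← hB g]
      show (B.equiv (B.unitsSMul εu) (Equiv.refl _)) (B g) = _
      rw [Module.Basis.equiv_apply, Equiv.refl_apply, Module.Basis.unitsSMul_apply, Units.smul_def]
    have hψs_on : ∀ g, ∀ x ∈ ℬ g, ψs x = (εu g : F) • x := by
      intro g x hx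
      obtain ⟨t, ht⟩ := Submodule.mem_span_singleton.mp ((hspan g) ▸ hx)
      rw [← ht, map_smul, hψsB, smul_comm]
    have hψs_mul : ∀ x y : C, ψs (x * y) = ψs x * ψs y := by
      have heq : (LinearMap.mul F C).compr₂ ψs.toLinearMap =
          (LinearMap.mul F C).compl₁₂ ψs.toLinearMap ψs.toLinearMap := by
        apply B.ext; intro g
        apply B.ext; intro h
        simp only [LinearMap.compr₂_apply, LinearMap.compl₁₂_apply, LinearMap.mul_apply',
          LinearEquiv.coe_coe, hB]
        have hm' := hmul g h _ _ (hu_mem g) (hu_mem h)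
        rw [hψs_on _ _ hm', hψs_on _ _ (hu_mem g), hψs_on _ _ (hu_mem h),
          smul_mul_smul_comm, hεmul, Units.val_mul]
      intro x y
      have := DFunLike.congr_fun (DFunLike.congr_fun heq x) y
      simpa using this
    have hψs_map : ∀ g, Submodule.map (ψs : C →ₗ[F] C) (ℬ g) = ℬ g := by
      intro g
      rw [hspan g, Submodule.map_span, Set.image_singleton, LinearEquiv.coe_coe, hψsB g]
      exact Submodule.span_singleton_smul_eq (Units.isUnit (εu g)) _
    have hεsingle : ∀ i, (εu (Pi.single i 1) : F) = if s i then -1 else 1 := by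
      intro i
      have hval : εu (Pi.single i 1) = if s i then -1 else 1 := by
        rw [hεu_def]
        simp only
        fin_cases i <;>
          · rw [Fin.prod_univ_three]
            simp [Pi.single_apply, show ZMod.val (1 : ZMod 2) = 1 from rfl]
      rw [hval]
      split_ifs <;> simp
    refine ⟨ψs, (hSmem ψs).mpr ⟨hψs_mul, hψs_map⟩, fun i => ?_⟩
    rw [hψs_on _ _ (hw i), hεsingle i]
    split_ifs <;> simp
  -- assemble the answer
  refine ⟨S, hSmem, ?_, ?_, ?_⟩
  · intro ψ hψ i
    obtain ⟨d, hd1, hde⟩ := (hkey ψ ((hSmem ψ).mp hψ).1 ((hSmem ψ).mp hψ).2).2 i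
    rcases hd1 with rfl | rfl
    · left; rw [hde, one_smul]
    · right; rw [hde, neg_smul, one_smul]
  · intro s
    obtain ⟨ψ, hm, hv⟩ := hconstr s
    exact ⟨ψ, hm, hv⟩
  · have hsgn : ∀ ψ : ↥S, ∀ i, ∃ d : F, (d = 1 ∨ d = -1) ∧ (ψ : C ≃ₗ[F] C) (w i) = d • w i :=
      fun ψ => (hkey ψ.1 ((hSmem ψ.1).mp ψ.2).1 ((hSmem ψ.1).mp ψ.2).2).2
    have hneg_ne : ∀ i, (-1 : F) • w i ≠ w i := by
      intro i h
      rw [neg_smul, one_smul] at h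
      exact hwneg i h
    let Φ : ↥S →* Multiplicative (Fin 3 → ZMod 2) :=
    { toFun := fun ψ => Multiplicative.ofAdd fun i =>
        if (ψ : C ≃ₗ[F] C) (w i) = w i then 0 else 1
      map_one' := congrArg Multiplicative.ofAdd (funext fun i => if_pos rfl)
      map_mul' := by
        intro ψ φ
        have h0 : (fun i => if ((ψ * φ : ↥S) : C ≃ₗ[F] C) (w i) = w i then (0 : ZMod 2) else 1)
            = fun i => (if (ψ : C ≃ₗ[F] C) (w i) = w i then (0 : ZMod 2) else 1)
              + (if (φ : C ≃ₗ[F] C) (w i) = w i then (0 : ZMod 2) else 1) := by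
          funext i
          obtain ⟨d1, hd1, he1⟩ := hsgn ψ i
          obtain ⟨d2, hd2, he2⟩ := hsgn φ i
          have happ : ((ψ * φ : ↥S) : C ≃ₗ[F] C) (w i) = (d2 * d1) • w i := by
            show (ψ : C ≃ₗ[F] C) ((φ : C ≃ₗ[F] C) (w i)) = _
            rw [he2, map_smul, he1, smul_smul]
          rw [happ, he1, he2]
          rcases hd1 with rfl | rfl <;> rcases hd2 with rfl | rfl <;>
            simp [hneg_ne i, hwneg i, show (1 + 1 : ZMod 2) = 0 from rfl]
        exact congrArg Multiplicative.ofAdd h0 }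
    have hinj : Function.Injective Φ := by
      refine (injective_iff_map_eq_one Φ).mpr ?_
      intro ψ hψ1
      have hfix : ∀ i, (ψ : C ≃ₗ[F] C) (w i) = w i := by
        intro i
        by_contra hne
        have h0 : (fun i => if (ψ : C ≃ₗ[F] C) (w i) = w i then (0 : ZMod 2) else 1)
            = fun _ => (0 : ZMod 2) := congrArg Multiplicative.toAdd hψ1
        have := congrFun h0 i
        rw [if_neg hne] at this
        exact one_ne_zero this
      have hm' := ((hSmem ψ.1).mp ψ.2).1
      have h1' := (hkey ψ.1 ((hSmem ψ.1).mp ψ.2).1 ((hSmem ψ.1).mp ψ.2).2).1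
      have hstep : ∀ a b c : C, ψ.1 a = a → ψ.1 b = b → ψ.1 c = c →
          ψ.1 ((a * b) * c) = (a * b) * c := by
        intro a b c ha hb hc
        rw [hm', hm', ha, hb, hc]
      have hufix : ∀ g, (ψ : C ≃ₗ[F] C) (u g) = u g := by
        intro g
        have f0 : ψ.1 (if g 0 = 1 then w 0 else 1) = (if g 0 = 1 then w 0 else 1) := by
          split_ifs; exacts [hfix 0, h1']
        have f1 : ψ.1 (if g 1 = 1 then w 1 else 1) = (if g 1 = 1 then w 1 else 1) := by
          split_ifs; exacts [hfix 1, h1']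
        have f2 : ψ.1 (if g 2 = 1 then w 2 else 1) = (if g 2 = 1 then w 2 else 1) := by
          split_ifs; exacts [hfix 2, h1']
        exact hstep _ _ _ f0 f1 f2
      have hlin : (ψ : C ≃ₗ[F] C).toLinearMap = (1 : C ≃ₗ[F] C).toLinearMap :=
        LinearMap.ext_on_range htop hufix
      exact Subtype.ext (LinearEquiv.toLinearMap_injective hlin)
    have hsurj : Function.Surjective Φ := by
      intro t
      obtain ⟨ψ, hmem, hval⟩ := hconstr fun i => decide (Multiplicative.toAdd t i = 1)
      refine ⟨⟨ψ, hmem⟩, ?_⟩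
      have h0 : (fun i => if ψ (w i) = w i then (0 : ZMod 2) else 1)
          = Multiplicative.toAdd t := by
        funext i
        rcases z2 (Multiplicative.toAdd t i) with h | h
        · have hs : (decide (Multiplicative.toAdd t i = 1)) = false := by simp [h]
          rw [show ψ (w i) = w i from by simpa [hs] using hval i, if_pos rfl, h]
        · have hs : (decide (Multiplicative.toAdd t i = 1)) = true := by simp [h]
          have hneg : ψ (w i) = -(w i) := by simpa [hs] using hval i
          rw [if_neg (by rw [hneg]; exact hwneg i), h]
      exact congrArg Multiplicative.ofAdd h0
    exact ⟨MulEquiv.ofBijective Φ ⟨hinj, hsurj⟩⟩
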